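/- arXiv:2207.04083 — 8 statements merged into one kernel-verified Lean document; each statement's English description precedes it below -/
import Mathlib

section
/- Let X be an n×n real matrix with XᵀX = Iₙ (orthonormal), let y ∈ ℝⁿ with y ≠ 0, and for λ ≥ 0 define L(α) = ‖y − Xα‖₂ + λ‖α‖₂ for α ∈ ℝⁿ. Then the zero vector α = 0 is a global minimizer of L if and only if λ ≥ 1. -/
open scoped BigOperators

/-- Euclidean norm of a vector in `ℝᵐ`. -/
noncomputable def norm2 {m : ℕ} (v : Fin m → ℝ) : ℝ := Real.sqrt (∑ i, (v i) ^ 2)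

/-- The square-root group-LASSO objective with orthonormal design:
`L(α) = ‖y − Xα‖₂ + λ‖α‖₂`. -/
noncomputable def sqrtGroupLassoObj {n : ℕ} (X : Matrix (Fin n) (Fin n) ℝ)
    (y : Fin n → ℝ) (lam : ℝ) (α : Fin n → ℝ) : ℝ :=
  norm2 (y - X.mulVec α) + lam * norm2 α

lemma norm2_eq_norm {m : ℕ} (v : Fin m → ℝ) :
    norm2 v = ‖(WithLp.equiv 2 (Fin m → ℝ)).symm v‖ := by
  rw [EuclideanSpace.norm_eq]
  simp [norm2, Real.norm_eq_abs, sq_abs]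

lemma norm2_zero {m : ℕ} : norm2 (0 : Fin m → ℝ) = 0 := by
  simp [norm2]

lemma norm2_nonneg {m : ℕ} (v : Fin m → ℝ) : 0 ≤ norm2 v := Real.sqrt_nonneg _

lemma norm2_pos {m : ℕ} (v : Fin m → ℝ) (hv : v ≠ 0) : 0 < norm2 v := by
  rw [norm2_eq_norm]
  rw [norm_pos_iff]
  intro h
  apply hv
  have := congrArg (WithLp.equiv 2 (Fin m → ℝ)) h
  simpa using this

lemma norm2_triangle {m : ℕ} (a b : Fin m → ℝ) :
    norm2 (a + b) ≤ norm2 a + norm2 b := by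
  rw [norm2_eq_norm, norm2_eq_norm, norm2_eq_norm]
  have : (WithLp.equiv 2 (Fin m → ℝ)).symm (a + b)
      = (WithLp.equiv 2 (Fin m → ℝ)).symm a + (WithLp.equiv 2 (Fin m → ℝ)).symm b := rfl
  rw [this]
  exact norm_add_le _ _

lemma norm2_mulVec {n : ℕ} (X : Matrix (Fin n) (Fin n) ℝ)
    (hX : X.transpose * X = 1) (α : Fin n → ℝ) :
    norm2 (X.mulVec α) = norm2 α := by
  unfold norm2
  congr 1
  have h1 : ∑ i, (X.mulVec α i) ^ 2 = dotProduct (X.mulVec α) (X.mulVec α) := by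
    simp [dotProduct, sq]
  have h2 : ∑ i, (α i) ^ 2 = dotProduct α α := by
    simp [dotProduct, sq]
  rw [h1, h2, Matrix.dotProduct_mulVec, ← Matrix.mulVec_transpose,
    Matrix.mulVec_mulVec, hX, Matrix.one_mulVec]

/-- With orthonormal design `XᵀX = Iₙ` and `y ≠ 0`, the zero vector is a global
minimizer of `L(α) = ‖y − Xα‖₂ + λ‖α‖₂` if and only if `λ ≥ 1`. -/
theorem zero_isMinimizer_iff {n : ℕ} (X : Matrix (Fin n) (Fin n) ℝ)
    (hX : X.transpose * X = 1) (y : Fin n → ℝ) (hy : y ≠ 0)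
    (lam : ℝ) (hlam : 0 ≤ lam) :
    (∀ α : Fin n → ℝ, sqrtGroupLassoObj X y lam 0 ≤ sqrtGroupLassoObj X y lam α) ↔
      1 ≤ lam := by
  have hXXt : X * X.transpose = 1 := mul_eq_one_comm.mp hX
  have hypos : 0 < norm2 y := norm2_pos y hy
  constructor
  · intro h
    have h1 : sqrtGroupLassoObj X y lam 0 = norm2 y := by
      simp [sqrtGroupLassoObj, norm2_zero]
    have h2 : sqrtGroupLassoObj X y lam (X.transpose.mulVec y) = lam * norm2 y := by
      rw [sqrtGroupLassoObj, Matrix.mulVec_mulVec, hXXt, Matrix.one_mulVec, sub_self,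
        norm2_zero, zero_add,
        norm2_mulVec X.transpose (by rwa [Matrix.transpose_transpose]) y]
    have := h (X.transpose.mulVec y)
    rw [h1, h2] at this
    nlinarith
  · intro h α
    rw [sqrtGroupLassoObj, sqrtGroupLassoObj, Matrix.mulVec_zero, sub_zero,
      norm2_zero, mul_zero, add_zero]
    have key : norm2 y ≤ norm2 (y - X.mulVec α) + norm2 (X.mulVec α) := by
      have := norm2_triangle (y - X.mulVec α) (X.mulVec α)
      simpa using this
    have h2 : norm2 (X.mulVec α) = norm2 α := norm2_mulVec X hX α
    nlinarith [norm2_nonneg α, norm2_nonneg (y - X.mulVec α)]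
end

section
/- Let z ∈ ℝᵐ with z ≠ 0, let λ > 0, and define G(β) = ‖z − β‖₂ + λ‖β‖₁ for β ∈ ℝᵐ. Then the zero vector β = 0 is a global minimizer of G if and only if λ·‖z‖₂ ≥ ‖z‖_∞, where ‖z‖_∞ = max_i |z_i|. -/
open scoped BigOperators

/-- ℓ1-norm of a vector in `ℝᵐ`. -/
noncomputable def norm1 {m : ℕ} (v : Fin m → ℝ) : ℝ := ∑ i, |v i|

/-- Sup-norm of a vector in `ℝᵐ`: `‖v‖_∞ = maxᵢ |vᵢ|`. -/
noncomputable def norminf {m : ℕ} (v : Fin m → ℝ) : ℝ := ⨆ i, |v i|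

/-- The square-root soft-waveshrink objective in the orthonormal wavelet domain:
`G(β) = ‖z − β‖₂ + λ‖β‖₁`. -/
noncomputable def srswObj {m : ℕ} (z : Fin m → ℝ) (lam : ℝ) (β : Fin m → ℝ) : ℝ :=
  norm2 (z - β) + lam * norm1 β

lemma norm2_sq {m : ℕ} (v : Fin m → ℝ) : (norm2 v) ^ 2 = ∑ i, (v i) ^ 2 :=
  Real.sq_sqrt (Finset.sum_nonneg fun _ _ => sq_nonneg _)

/-- For `z ≠ 0` and `λ > 0`, the zero vector is a global minimizer of
`G(β) = ‖z − β‖₂ + λ‖β‖₁` if and only if `λ‖z‖₂ ≥ ‖z‖_∞`. -/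
theorem zero_isMinimizer_iff_srsw {m : ℕ} (z : Fin m → ℝ) (hz : z ≠ 0)
    (lam : ℝ) (hlam : 0 < lam) :
    (∀ β : Fin m → ℝ, srswObj z lam 0 ≤ srswObj z lam β) ↔
      norminf z ≤ lam * norm2 z := by
  have hN : 0 < norm2 z := norm2_pos z hz
  have hm : 0 < m := by
    rcases Nat.eq_zero_or_pos m with h | h
    · subst h; exact absurd (funext fun i => i.elim0) hz
    · exact h
  have : Nonempty (Fin m) := ⟨⟨0, hm⟩⟩
  have hG0 : srswObj z lam 0 = norm2 z := by
    simp [srswObj, norm1]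
  constructor
  · intro hmin
    refine ciSup_le fun i => ?_
    -- show |z i| ≤ lam * norm2 z
    refine le_of_forall_pos_le_add fun ε hε => ?_
    set N := norm2 z with hNdef
    set t : ℝ := min (2*ε) (N / lam) with ht
    have ht0 : 0 < t := lt_min (by linarith) (div_pos hN hlam)
    have htN : lam * t ≤ N := by
      have : t ≤ N / lam := min_le_right _ _
      calc lam * t ≤ lam * (N/lam) := by nlinarith
        _ = N := by field_simp
    set s : ℝ := if 0 ≤ z i then 1 else -1 with hs
    have hsz : s * z i = |z i| := by
      rcases le_or_gt 0 (z i) with h | h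
      · simp [hs, h, abs_of_nonneg h]
      · simp [hs, not_le.2 h, abs_of_neg h]
    have hs2 : s^2 = 1 := by
      rcases le_or_gt 0 (z i) with h | h
      · simp [hs, h]
      · simp [hs, not_le.2 h]
    set c : ℝ := s * t with hc
    set β : Fin m → ℝ := Pi.single i c with hβ
    have hβ1 : norm1 β = t := by
      have habs : |c| = t := by
        rw [hc, abs_mul, abs_of_nonneg ht0.le]
        rcases le_or_gt 0 (z i) with h | h
        · simp [hs, h]
        · simp [hs, not_le.2 h]
      have : ∀ j, |β j| = (Pi.single i t : Fin m → ℝ) j := by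
        intro j
        rcases eq_or_ne j i with rfl | h
        · simpa [hβ] using habs
        · simp [hβ, Pi.single_apply, h]
      rw [norm1]
      simp_rw [this]
      simp [Finset.sum_pi_single']
    have hsum : ∑ j, (z j - β j)^2 = (∑ j, z j ^2) - 2 * t * |z i| + t^2 := by
      have step : ∀ j, (z j - β j)^2 = z j ^ 2 - (Pi.single i (2 * t * |z i| - t^2) : Fin m → ℝ) j := by
        intro j
        rcases eq_or_ne j i with rfl | h
        · simp only [hβ, Pi.single_eq_same, hc]
          have : (z j - s * t)^2 = z j^2 - 2*t*(s*z j) + t^2 * s^2 := by ring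
          rw [this, hsz, hs2]; ring
        · simp [hβ, Pi.single_apply, h]
      simp_rw [step, Finset.sum_sub_distrib, Finset.sum_pi_single']
      simp only [Finset.mem_univ, if_true]
      ring
    have hA : (0:ℝ) ≤ (∑ j, z j ^2) - 2 * t * |z i| + t^2 := by
      rw [← hsum]; positivity
    have hkey := hmin β
    rw [hG0, srswObj, hβ1] at hkey
    have h2 : norm2 (z - β) = Real.sqrt ((∑ j, z j ^2) - 2 * t * |z i| + t^2) := by
      rw [norm2]; simp only [Pi.sub_apply]; rw [hsum]
    rw [h2] at hkey
    -- N - lam * t ≤ sqrt A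
    have h3 : N - lam * t ≤ Real.sqrt ((∑ j, z j ^2) - 2 * t * |z i| + t^2) := by linarith
    have h4 : (N - lam * t)^2 ≤ (∑ j, z j ^2) - 2 * t * |z i| + t^2 := by
      have := Real.sq_sqrt hA
      nlinarith [Real.sqrt_nonneg ((∑ j, z j ^2) - 2 * t * |z i| + t^2), htN]
    have hN2 : N^2 = ∑ j, z j ^2 := norm2_sq z
    have ht2e : t ≤ 2*ε := min_le_left _ _
    nlinarith [sq_nonneg (lam*t)]
  · intro h β
    rw [hG0, srswObj]
    rw [norminf] at h
    have hzi : ∀ i, |z i| ≤ lam * norm2 z := fun i =>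
      le_trans (le_ciSup (Set.Finite.bddAbove (Set.finite_range fun j => |z j|)) i) h
    have hCS : ∑ j, z j * (z j - β j) ≤ norm2 z * norm2 (z - β) := by
      have := Real.sum_mul_le_sqrt_mul_sqrt Finset.univ z (fun j => z j - β j)
      simpa [norm2] using this
    have hzb : ∑ j, z j * β j ≤ lam * norm2 z * norm1 β := by
      calc ∑ j, z j * β j ≤ ∑ j, |z j| * |β j| := by
            refine Finset.sum_le_sum fun j _ => ?_
            calc z j * β j ≤ |z j * β j| := le_abs_self _
              _ = |z j| * |β j| := abs_mul _ _
        _ ≤ ∑ j, (lam * norm2 z) * |β j| := by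
            refine Finset.sum_le_sum fun j _ => ?_
            exact mul_le_mul_of_nonneg_right (hzi j) (abs_nonneg _)
        _ = lam * norm2 z * norm1 β := by rw [norm1, Finset.mul_sum]
    have hsplit : (norm2 z)^2 = (∑ j, z j * (z j - β j)) + ∑ j, z j * β j := by
      rw [norm2_sq, ← Finset.sum_add_distrib]
      congr 1; funext j; ring
    have : (norm2 z)^2 ≤ norm2 z * norm2 (z - β) + lam * norm2 z * norm1 β := by
      rw [hsplit]; linarith
    have h1nn : 0 ≤ norm1 β := Finset.sum_nonneg fun _ _ => abs_nonneg _
    nlinarith [norm2_nonneg (z - β), h1nn, hN]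
end

section
/- Let z ∈ ℝᵐ, let λ > 0, and define G(β) = ‖z − β‖₂ + λ‖β‖₁ for β ∈ ℝᵐ. Let ‖z‖₀ = #{i : z_i ≠ 0}. Then β = z is a global minimizer of G if and only if λ·√(‖z‖₀) ≤ 1. -/
open scoped BigOperators

/-- Number of nonzero entries of a vector in `ℝᵐ`: `‖v‖₀`. -/
noncomputable def norm0 {m : ℕ} (v : Fin m → ℝ) : ℕ := {i | v i ≠ 0}.ncard

lemma norm0_eq {m : ℕ} (z : Fin m → ℝ) :
    norm0 z = (Finset.univ.filter (fun i => z i ≠ 0)).card := by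
  rw [norm0, ← Set.ncard_coe_finset]
  congr 1
  ext i; simp

lemma key_cs {m : ℕ} (z v : Fin m → ℝ) :
    ∑ i ∈ Finset.univ.filter (fun i => z i ≠ 0), |v i| ≤
      Real.sqrt (norm0 z) * norm2 v := by
  set S := Finset.univ.filter (fun i : Fin m => z i ≠ 0) with hS
  have h1 : (∑ i ∈ S, |v i|) ^ 2 ≤ (S.card : ℝ) * ∑ i ∈ S, (v i) ^ 2 := by
    have := Finset.sum_mul_sq_le_sq_mul_sq S (fun _ => (1:ℝ)) (fun i => |v i|)
    simpa [sq_abs] using this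
  have h2 : ∑ i ∈ S, (v i) ^ 2 ≤ ∑ i, (v i) ^ 2 :=
    Finset.sum_le_sum_of_subset_of_nonneg (Finset.subset_univ S)
      (fun i _ _ => sq_nonneg _)
  have h3 : (∑ i ∈ S, |v i|) ^ 2 ≤ (S.card : ℝ) * ∑ i, (v i) ^ 2 :=
    h1.trans (by gcongr)
  have hnn : 0 ≤ ∑ i ∈ S, |v i| := Finset.sum_nonneg fun i _ => abs_nonneg _
  have := (Real.le_sqrt hnn (by positivity)).2 h3
  calc ∑ i ∈ S, |v i| ≤ Real.sqrt ((S.card : ℝ) * ∑ i, (v i) ^ 2) := this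
    _ = Real.sqrt (S.card : ℝ) * norm2 v := by
        rw [norm2, Real.sqrt_mul (Nat.cast_nonneg _)]
    _ = Real.sqrt (norm0 z) * norm2 v := by rw [norm0_eq]

/-- For `λ > 0`, `β = z` is a global minimizer of `G(β) = ‖z − β‖₂ + λ‖β‖₁`
if and only if `λ·√(‖z‖₀) ≤ 1`. -/
theorem interpolant_isMinimizer_iff_srsw {m : ℕ} (z : Fin m → ℝ)
    (lam : ℝ) (hlam : 0 < lam) :
    (∀ β : Fin m → ℝ, srswObj z lam z ≤ srswObj z lam β) ↔
      lam * Real.sqrt (norm0 z) ≤ 1 := by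
  set S := Finset.univ.filter (fun i : Fin m => z i ≠ 0) with hS
  have hGz : srswObj z lam z = lam * norm1 z := by
    simp [srswObj, norm2]
  constructor
  · intro h
    rcases eq_or_ne S ∅ with hemp | hne
    · have : norm0 z = 0 := by rw [norm0_eq, ← hS, hemp]; simp
      simp [this, hlam.le]
    · -- S nonempty
      have hSne : S.Nonempty := Finset.nonempty_iff_ne_empty.2 hne
      set t : ℝ := S.inf' hSne (fun i => |z i|) with ht
      have htpos : 0 < t := by
        rw [ht]
        apply Finset.lt_inf'_iff hSne (a := (0:ℝ)) |>.2
        intro i hi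
        have : z i ≠ 0 := by simpa [hS] using hi
        exact abs_pos.2 this
      have htle : ∀ i ∈ S, t ≤ |z i| := fun i hi => Finset.inf'_le _ hi
      set β : Fin m → ℝ := fun i => z i - t * Real.sign (z i) with hβ
      have hsub : ∀ i, (z - β) i = t * Real.sign (z i) := by
        intro i; simp [hβ]
      have hsign : ∀ i ∈ S, |Real.sign (z i)| = 1 := by
        intro i hi
        have hz : z i ≠ 0 := by simpa [hS] using hi
        rcases lt_or_gt_of_ne hz with h' | h'
        · rw [Real.sign_of_neg h']; simp
        · rw [Real.sign_of_pos h']; simp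
      have hsign0 : ∀ i ∉ S, Real.sign (z i) = 0 := by
        intro i hi
        have : z i = 0 := by by_contra h'; exact hi (by simp [hS, h'])
        simp [this]
      -- norm2 (z - β) = t * sqrt (card S)
      have hn2 : norm2 (z - β) = t * Real.sqrt (S.card) := by
        rw [norm2]
        have : ∀ i, ((z - β) i) ^ 2 = t^2 * (Real.sign (z i))^2 := by
          intro i; rw [hsub i]; ring
        rw [Finset.sum_congr rfl fun i _ => this i]
        have hsum : ∑ i, t^2 * (Real.sign (z i))^2 = t^2 * S.card := by
          rw [← Finset.sum_filter_add_sum_filter_not Finset.univ (fun i => z i ≠ 0)]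
          have h1 : ∑ i ∈ S, t^2 * (Real.sign (z i))^2 = t^2 * S.card := by
            have he : ∀ i ∈ S, t^2 * (Real.sign (z i))^2 = t^2 := fun i hi => by
              rw [← sq_abs (Real.sign (z i)), hsign i hi, one_pow, mul_one]
            rw [Finset.sum_congr rfl he, Finset.sum_const, nsmul_eq_mul, mul_comm]
          have h2 : ∑ i ∈ Finset.univ.filter (fun i => ¬ z i ≠ 0), t^2 * (Real.sign (z i))^2 = 0 := by
            apply Finset.sum_eq_zero
            intro i hi
            have : z i = 0 := by simpa using hi
            simp [this]
          rw [← hS, h1, h2, add_zero]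
        rw [hsum, Real.sqrt_mul (sq_nonneg t), Real.sqrt_sq htpos.le]
      -- norm1 β = norm1 z - t * card S
      have hn1 : norm1 β = norm1 z - t * S.card := by
        rw [norm1, norm1]
        have : ∀ i, |β i| = |z i| - t * |Real.sign (z i)| := by
          intro i
          by_cases hi : i ∈ S
          · have hz : z i ≠ 0 := by simpa [hS] using hi
            rw [hsign i hi, mul_one]
            show |z i - t * Real.sign (z i)| = |z i| - t
            rcases lt_or_gt_of_ne hz with h' | h'
            · rw [Real.sign_of_neg h', abs_of_neg h']
              have : z i - t * (-1) = z i + t := by ring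
              rw [this, abs_of_nonpos (by have := htle i hi; rw [abs_of_neg h'] at this; linarith)]
              ring
            · rw [Real.sign_of_pos h', abs_of_pos h']
              have : z i - t * 1 = z i - t := by ring
              rw [this, abs_of_nonneg (by have := htle i hi; rw [abs_of_pos h'] at this; linarith)]
          · have hz : z i = 0 := by by_contra h'; exact hi (by simp [hS, h'])
            simp [hβ, hz]
        rw [Finset.sum_congr rfl fun i _ => this i, Finset.sum_sub_distrib]
        congr 1
        rw [← Finset.sum_filter_add_sum_filter_not Finset.univ (fun i => z i ≠ 0), ← hS]
        have h1 : ∑ i ∈ S, t * |Real.sign (z i)| = t * S.card := by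
          have he : ∀ i ∈ S, t * |Real.sign (z i)| = t := fun i hi => by
            rw [hsign i hi, mul_one]
          rw [Finset.sum_congr rfl he, Finset.sum_const, nsmul_eq_mul, mul_comm]
        have h2 : ∑ i ∈ Finset.univ.filter (fun i => ¬ z i ≠ 0), t * |Real.sign (z i)| = 0 := by
          apply Finset.sum_eq_zero; intro i hi
          have : z i = 0 := by simpa using hi
          simp [this]
        rw [h1, h2, add_zero]
      have := h β
      rw [hGz, srswObj, hn2, hn1] at this
      -- lam * norm1 z ≤ t * √card + lam * (norm1 z - t * card)
      have hkey : lam * (t * S.card) ≤ t * Real.sqrt S.card := by nlinarith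
      have hcard : lam * (S.card : ℝ) ≤ Real.sqrt S.card := by
        have := (mul_le_mul_iff_of_pos_left htpos).1 (by linarith [hkey] : t * (lam * S.card) ≤ t * Real.sqrt S.card)
        linarith
      rcases Nat.eq_zero_or_pos S.card with hc | hc
      · exact absurd hc (by simpa [Finset.card_eq_zero] using hne)
      · have hsq : 0 < Real.sqrt S.card := Real.sqrt_pos.2 (by positivity)
        have hmul : Real.sqrt (S.card : ℝ) * Real.sqrt (S.card : ℝ) = (S.card : ℝ) :=
          Real.mul_self_sqrt (Nat.cast_nonneg _)
        rw [norm0_eq, ← hS]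
        rw [← mul_le_mul_iff_of_pos_right hsq, one_mul, mul_assoc, hmul]
        exact hcard
  · intro h β
    rw [hGz, srswObj]
    have h1 : norm1 z - norm1 β ≤ ∑ i ∈ S, |z i - β i| := by
      rw [norm1, norm1, ← Finset.sum_sub_distrib,
        ← Finset.sum_filter_add_sum_filter_not Finset.univ (fun i => z i ≠ 0), ← hS]
      have ha : ∑ i ∈ S, (|z i| - |β i|) ≤ ∑ i ∈ S, |z i - β i| :=
        Finset.sum_le_sum fun i _ => abs_sub_abs_le_abs_sub _ _
      have hb : ∑ i ∈ Finset.univ.filter (fun i => ¬ z i ≠ 0), (|z i| - |β i|) ≤ 0 := by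
        apply Finset.sum_nonpos; intro i hi
        have : z i = 0 := by simpa using hi
        simp [this]
      linarith
    have h2 : ∑ i ∈ S, |z i - β i| ≤ Real.sqrt (norm0 z) * norm2 (z - β) := by
      have := key_cs z (z - β)
      simpa [hS] using this
    have hn2nn : 0 ≤ norm2 (z - β) := Real.sqrt_nonneg _
    have h3 : lam * Real.sqrt (norm0 z) * norm2 (z - β) ≤ 1 * norm2 (z - β) := by
      gcongr
    nlinarith [Real.sqrt_nonneg (norm0 z : ℝ)]
end

section
/- Let z ∈ ℝᵐ, λ > 0, and suppose β ∈ ℝᵐ satisfies the fixed-point equation β = η_φ(z) componentwise with φ = λ‖z − β‖₂ > 0, where η is the soft-thresholding function. Let j = #{i : |z_i| ≤ φ} and suppose λ²·(m − j) < 1. Then φ² = λ²·(Σ_{i : |z_i| ≤ φ} z_i²) / (1 − λ²·(m − j)); equivalently, φ = λ·√( (sum of the j smallest squared entries |z|_(1)² + … + |z|_(j)²) / (1 − λ²(m − j)) ). -/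
open scoped BigOperators Classical

/-- Soft-thresholding with threshold `t`: `η_t(x) = sign(x)·max(|x| − t, 0)`. -/
noncomputable def soft (t x : ℝ) : ℝ := Real.sign x * max (|x| - t) 0

/-- If `β` satisfies the fixed-point equation `β = η_φ(z)` with
`φ = λ‖z − β‖₂ > 0`, `j = #{i : |zᵢ| ≤ φ}` and `λ²(m − j) < 1`, then
`φ² = λ²·(Σ_{i : |zᵢ| ≤ φ} zᵢ²) / (1 − λ²(m − j))`. -/
theorem implicit_threshold_formula {m : ℕ} (z β : Fin m → ℝ) (lam φ : ℝ)
    (hlam : 0 < lam)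
    (hφ : φ = lam * norm2 (z - β)) (hφpos : 0 < φ)
    (hfix : ∀ i, β i = soft φ (z i))
    (j : ℕ) (hj : j = (Finset.univ.filter (fun i : Fin m => |z i| ≤ φ)).card)
    (hden : lam ^ 2 * ((m : ℝ) - (j : ℝ)) < 1) :
    φ ^ 2 =
      lam ^ 2 * (∑ i ∈ Finset.univ.filter (fun i : Fin m => |z i| ≤ φ), (z i) ^ 2) /
        (1 - lam ^ 2 * ((m : ℝ) - (j : ℝ))) := by
  set S := Finset.univ.filter (fun i : Fin m => |z i| ≤ φ) with hS
  -- pointwise: (z i - β i)^2 = if i ∈ S then (z i)^2 else φ^2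
  have hpt : ∀ i : Fin m, (z i - β i) ^ 2 = if |z i| ≤ φ then (z i) ^ 2 else φ ^ 2 := by
    intro i
    rw [hfix i]
    unfold soft
    by_cases h : |z i| ≤ φ
    · simp [h, max_eq_right (by linarith : |z i| - φ ≤ 0)]
    · push_neg at h
      have hz : z i ≠ 0 := by
        intro h0; rw [h0] at h; simp at h; linarith
      have hmax : max (|z i| - φ) 0 = |z i| - φ := max_eq_left (by linarith)
      rw [if_neg (not_le.mpr h), hmax]
      rcases lt_or_gt_of_ne hz with hneg | hpos
      · rw [Real.sign_of_neg hneg, abs_of_neg hneg]; ring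
      · rw [Real.sign_of_pos hpos, abs_of_pos hpos]; ring
  have hsum : ∑ i, (z i - β i) ^ 2 = (∑ i ∈ S, (z i) ^ 2) + ((m : ℝ) - (j : ℝ)) * φ ^ 2 := by
    rw [← Finset.sum_filter_add_sum_filter_not Finset.univ (fun i : Fin m => |z i| ≤ φ)
        (fun i => (z i - β i) ^ 2)]
    have h1 : ∑ i ∈ S, (z i - β i) ^ 2 = ∑ i ∈ S, (z i) ^ 2 := by
      apply Finset.sum_congr rfl
      intro i hi
      rw [hS, Finset.mem_filter] at hi
      rw [hpt i, if_pos hi.2]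
    have h2 : ∑ i ∈ Finset.univ.filter (fun i : Fin m => ¬ |z i| ≤ φ), (z i - β i) ^ 2
        = ((m : ℝ) - (j : ℝ)) * φ ^ 2 := by
      have : ∀ i ∈ Finset.univ.filter (fun i : Fin m => ¬ |z i| ≤ φ),
          (z i - β i) ^ 2 = φ ^ 2 := by
        intro i hi
        rw [Finset.mem_filter] at hi
        rw [hpt i, if_neg hi.2]
      rw [Finset.sum_congr rfl this, Finset.sum_const, nsmul_eq_mul]
      congr 1
      have hcard := Finset.card_filter_add_card_filter_not
        (s := (Finset.univ : Finset (Fin m))) (p := fun i : Fin m => |z i| ≤ φ)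
      rw [Finset.card_univ, Fintype.card_fin] at hcard
      have : ((Finset.univ.filter (fun i : Fin m => ¬ |z i| ≤ φ)).card : ℝ)
          = (m : ℝ) - (j : ℝ) := by
        rw [hj]
        have h3 : S.card + (Finset.filter (fun i => ¬|z i| ≤ φ) Finset.univ).card = m := hcard
        push_cast [← h3]
        ring
      exact this
    rw [h1, h2]
  -- main equation
  have hnn : (0:ℝ) ≤ ∑ i, ((z - β) i) ^ 2 := Finset.sum_nonneg fun i _ => sq_nonneg _
  have hφ2 : φ ^ 2 = lam ^ 2 * ∑ i, (z i - β i) ^ 2 := by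
    rw [hφ]
    unfold norm2
    rw [mul_pow, Real.sq_sqrt hnn]
    simp [Pi.sub_apply]
  rw [hsum] at hφ2
  have hden' : 1 - lam ^ 2 * ((m : ℝ) - (j : ℝ)) ≠ 0 := by linarith
  field_simp
  linarith [hφ2]
end

section
/- Let z ∈ ℝᵐ, let λ > 0 satisfy 1/√(‖z‖₀) < λ < ‖z‖_∞/‖z‖₂ (in particular z ≠ 0), and define G(β) = ‖z − β‖₂ + λ‖β‖₁. Then any global minimizer β of G satisfies β ≠ 0 and β ≠ z. -/
open scoped BigOperators

set_option maxHeartbeats 1000000 in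
/-- If `1/√(‖z‖₀) < λ < ‖z‖_∞/‖z‖₂` (in particular `z ≠ 0`), then any global
minimizer `β` of `G(β) = ‖z − β‖₂ + λ‖β‖₁` satisfies `β ≠ 0` and `β ≠ z`. -/
theorem minimizer_nontrivial_srsw {m : ℕ} (z : Fin m → ℝ) (lam : ℝ)
    (hlam : 0 < lam)
    (hlow : 1 / Real.sqrt (norm0 z) < lam)
    (hhigh : lam < norminf z / norm2 z) :
    ∀ β : Fin m → ℝ, (∀ γ : Fin m → ℝ, srswObj z lam β ≤ srswObj z lam γ) →
      β ≠ 0 ∧ β ≠ z := by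
  intro β hβ
  set a := norm2 z with ha_def
  have ha0 : 0 ≤ a := Real.sqrt_nonneg _
  have ha : 0 < a := by
    rcases ha0.lt_or_eq with h | h
    · exact h
    · exfalso; rw [← h, div_zero] at hhigh; linarith
  have hsum : a ^ 2 = ∑ i, (z i) ^ 2 := by
    rw [ha_def, norm2, Real.sq_sqrt]; positivity
  have hsup : lam * a < norminf z := (lt_div_iff₀ ha).1 hhigh
  -- nonempty
  have hne : Nonempty (Fin m) := by
    by_contra h
    rw [not_nonempty_iff] at h
    rw [norminf, Real.iSup_of_isEmpty] at hsup
    nlinarith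
  -- max coordinate
  obtain ⟨j, hj⟩ := Finite.exists_max (fun i => |z i|)
  have hsupj : norminf z ≤ |z j| := ciSup_le hj
  set b := |z j| with hb_def
  have hb : lam * a < b := lt_of_lt_of_le hsup hsupj
  have hb0 : 0 < b := lt_of_le_of_lt (by positivity) hb
  have hzj : z j ≠ 0 := fun h => by simp [hb_def, h] at hb0
  have hba : b ≤ a := by
    have h1 : (z j) ^ 2 ≤ ∑ i, (z i) ^ 2 :=
      Finset.single_le_sum (fun i _ => sq_nonneg (z i)) (Finset.mem_univ j)
    nlinarith [sq_abs (z j)]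
  have hl1 : lam < 1 := by nlinarith
  constructor
  · -- β ≠ 0
    intro hβ0
    set t := b - lam * a with ht_def
    have ht : 0 < t := by simp [ht_def]; linarith
    set γ : Fin m → ℝ := fun i => if i = j then (t / b) * z i else 0 with hγ_def
    have hs1 : ∑ i, (z i - γ i) ^ 2 = a ^ 2 - 2 * t * b + t ^ 2 := by
      have e1 : ∑ i, (z i - γ i) ^ 2
          = (z j - γ j) ^ 2 + ∑ i ∈ Finset.univ.erase j, (z i - γ i) ^ 2 :=
        (Finset.add_sum_erase _ _ (Finset.mem_univ j)).symm
      have e2 : ∑ i, (z i) ^ 2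
          = (z j) ^ 2 + ∑ i ∈ Finset.univ.erase j, (z i) ^ 2 :=
        (Finset.add_sum_erase _ _ (Finset.mem_univ j)).symm
      have e3 : ∑ i ∈ Finset.univ.erase j, (z i - γ i) ^ 2
          = ∑ i ∈ Finset.univ.erase j, (z i) ^ 2 := by
        refine Finset.sum_congr rfl fun i hi => ?_
        have : i ≠ j := Finset.ne_of_mem_erase hi
        simp [hγ_def, this]
      have e4 : (z j - γ j) ^ 2 = (b - t) ^ 2 := by
        have : γ j = (t / b) * z j := by simp [hγ_def]
        have hbz : b ^ 2 = (z j) ^ 2 := sq_abs (z j)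
        rw [this]
        field_simp
        nlinarith [sq_abs (z j)]
      have hbz : b ^ 2 = (z j) ^ 2 := sq_abs (z j)
      rw [e1, e3, e4]
      linarith [e2, hsum, hbz]
    have hn1γ : norm1 γ = t := by
      rw [norm1]
      rw [Finset.sum_eq_single j]
      · have h2 : |(t / b) * z j| = t := by
          rw [abs_mul, ← hb_def, abs_of_pos (div_pos ht hb0),
            div_mul_cancel₀ _ (ne_of_gt hb0)]
        simpa [hγ_def] using h2
      · intro i _ hij; simp [hγ_def, hij]
      · intro h; exact absurd (Finset.mem_univ j) h
    have hkey : srswObj z lam γ < a := by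
      rw [srswObj, hn1γ, norm2]
      have hss : ∑ i, ((z - γ) i) ^ 2 = a ^ 2 - 2 * t * b + t ^ 2 := by
        simp only [Pi.sub_apply]; exact hs1
      rw [hss]
      have hpos : 0 < a - lam * t := by nlinarith
      have : Real.sqrt (a ^ 2 - 2 * t * b + t ^ 2) < a - lam * t := by
        rw [Real.sqrt_lt' hpos]
        have h1 : t * (b - lam * a) = t * t := by rw [← ht_def]
        nlinarith [h1, mul_pos ht ht, sq_nonneg (lam * t)]
      linarith
    have h0 : srswObj z lam β = a := by
      rw [hβ0, srswObj, norm1]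
      simp [norm2, ha_def]
    have := hβ γ
    rw [h0] at this
    linarith
  · -- β ≠ z
    intro hβz
    set S : Finset (Fin m) := Finset.univ.filter (fun i => z i ≠ 0) with hS_def
    have hjS : j ∈ S := by simp [hS_def, hzj]
    have hSne : S.Nonempty := ⟨j, hjS⟩
    set k := S.card with hk_def
    have hk0 : 0 < k := Finset.card_pos.2 hSne
    have hnorm0 : norm0 z = k := by
      rw [norm0, hk_def, ← Set.ncard_coe_finset]
      congr 1
      ext i; simp [hS_def]
    have hsk : 0 < Real.sqrt k := Real.sqrt_pos.2 (by exact_mod_cast hk0)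
    have hlk : 1 < lam * Real.sqrt k := by
      rw [hnorm0] at hlow
      exact (div_lt_iff₀ hsk).1 hlow
    set t := S.inf' hSne (fun i => |z i|) with ht_def
    have ht : 0 < t := (Finset.lt_inf'_iff hSne).2 (fun i hi => by
      have : z i ≠ 0 := by simpa [hS_def] using hi
      positivity)
    have htle : ∀ i ∈ S, t ≤ |z i| := fun i hi => Finset.inf'_le _ hi
    set γ : Fin m → ℝ := fun i => z i - t * Real.sign (z i) with hγ_def
    -- norm2 (z - γ)
    have hsq : ∀ i, ((z - γ) i) ^ 2 = if i ∈ S then t ^ 2 else 0 := by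
      intro i
      have : (z - γ) i = t * Real.sign (z i) := by simp [hγ_def]
      rw [this]
      by_cases hzi : z i ≠ 0
      · rcases hzi.lt_or_gt with h | h
        · simp [hS_def, hzi, Real.sign_of_neg h]
        · simp [hS_def, hzi, Real.sign_of_pos h]
      · push_neg at hzi
        simp [hS_def, hzi]
    have hn2 : norm2 (z - γ) = t * Real.sqrt k := by
      rw [norm2]
      have : ∑ i, ((z - γ) i) ^ 2 = k * t ^ 2 := by
        rw [Finset.sum_congr rfl (fun i _ => hsq i), Finset.sum_ite_mem,
          Finset.univ_inter, Finset.sum_const, hk_def]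
        simp [mul_comm]
      rw [this]
      rw [show (k : ℝ) * t ^ 2 = (t * Real.sqrt k) ^ 2 by
        rw [mul_pow, Real.sq_sqrt (by positivity)]; ring]
      exact Real.sqrt_sq (by positivity)
    -- norm1 γ
    have habs : ∀ i ∈ S, |γ i| = |z i| - t := by
      intro i hi
      have hzi : z i ≠ 0 := by simpa [hS_def] using hi
      have hti := htle i hi
      rcases hzi.lt_or_gt with h | h
      · rw [hγ_def]
        simp only [Real.sign_of_neg h]
        rw [abs_of_nonpos (by rw [abs_of_neg h] at hti; linarith), abs_of_neg h]
        ring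
      · rw [hγ_def]
        simp only [Real.sign_of_pos h]
        rw [abs_of_nonneg (by rw [abs_of_pos h] at hti; linarith), abs_of_pos h]
        ring
    have hγ0 : ∀ i ∉ S, γ i = 0 := by
      intro i hi
      have hzi : z i = 0 := by simpa [hS_def] using hi
      simp [hγ_def, hzi]
    have hn1 : norm1 γ = norm1 z - k * t := by
      rw [norm1, norm1]
      have e1 : ∑ i, |γ i| = ∑ i ∈ S, |γ i| := by
        rw [← Finset.sum_filter_add_sum_filter_not Finset.univ (· ∈ S)]
        have : ∑ i ∈ Finset.univ.filter (· ∉ S), |γ i| = 0 :=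
          Finset.sum_eq_zero fun i hi => by
            rw [hγ0 i (by simpa using hi)]; simp
        rw [this, add_zero]
        congr 1
        ext i; simp
      have e2 : ∑ i, |z i| = ∑ i ∈ S, |z i| := by
        rw [← Finset.sum_filter_add_sum_filter_not Finset.univ (· ∈ S)]
        have : ∑ i ∈ Finset.univ.filter (· ∉ S), |z i| = 0 :=
          Finset.sum_eq_zero fun i hi => by
            have hzi : z i = 0 := by
              have := Finset.mem_filter.1 hi
              simpa [hS_def] using this.2
            simp [hzi]
        rw [this, add_zero]
        congr 1
        ext i; simp
      rw [e1, e2]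
      rw [Finset.sum_congr rfl habs, Finset.sum_sub_distrib, Finset.sum_const, hk_def]
      simp [mul_comm]
    have hGz : srswObj z lam z = lam * norm1 z := by
      rw [srswObj]
      have : norm2 (z - z) = 0 := by simp [norm2]
      rw [this, zero_add]
    have hGγ : srswObj z lam γ = t * Real.sqrt k + lam * (norm1 z - k * t) := by
      rw [srswObj, hn2, hn1]
    have hkey : srswObj z lam γ < srswObj z lam z := by
      rw [hGz, hGγ]
      have hkk : Real.sqrt k * Real.sqrt k = (k : ℝ) :=
        Real.mul_self_sqrt (by positivity)
      have h4 : t * Real.sqrt k < t * Real.sqrt k * (lam * Real.sqrt k) := by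
        nlinarith [mul_pos ht hsk, hlk]
      have h5 : t * Real.sqrt k * (lam * Real.sqrt k) = lam * ((k : ℝ) * t) := by
        linear_combination (lam * t) * hkk
      linarith [h4.trans_eq h5]
    have := hβ γ
    rw [hβz] at this
    linarith
end

section
/- Fix z ∈ ℝᵐ and λ > 0, and define F(β) = η_{λ‖z−β‖₂}(z) ∈ ℝᵐ, where the soft-thresholding function η_t(x) = sign(x)·max(|x| − t, 0) is applied componentwise. Then F is Lipschitz continuous with Lipschitz constant λ√m: for all β₁, β₂ ∈ ℝᵐ, ‖F(β₁) − F(β₂)‖₂ ≤ λ√m · ‖β₁ − β₂‖₂. -/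
open scoped BigOperators

lemma abs_norm2_sub_norm2 {m : ℕ} (a b : Fin m → ℝ) :
    |norm2 a - norm2 b| ≤ norm2 (a - b) := by
  rw [norm2_eq_norm, norm2_eq_norm, norm2_eq_norm]
  exact abs_norm_sub_norm_le _ _

lemma soft_lip (t₁ t₂ x : ℝ) : |soft t₁ x - soft t₂ x| ≤ |t₁ - t₂| := by
  have hs : |Real.sign x| ≤ 1 := by
    rcases lt_trichotomy x 0 with h | h | h
    · simp [Real.sign_of_neg h]
    · simp [h]
    · simp [Real.sign_of_pos h]
  have : soft t₁ x - soft t₂ x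
      = Real.sign x * (max (|x| - t₁) 0 - max (|x| - t₂) 0) := by
    simp [soft]; ring
  rw [this, abs_mul]
  calc |Real.sign x| * |max (|x| - t₁) 0 - max (|x| - t₂) 0|
      ≤ 1 * |(|x| - t₁) - (|x| - t₂)| := by
        exact mul_le_mul hs (abs_max_sub_max_le_abs _ _ _) (abs_nonneg _) zero_le_one
    _ = |t₁ - t₂| := by rw [one_mul, show (|x| - t₁) - (|x| - t₂) = -(t₁ - t₂) by ring, abs_neg]

/-- For fixed `z` and `λ > 0`, the map `β ↦ η_{λ‖z−β‖₂}(z)` is Lipschitz with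
constant `λ√m`. -/
theorem lipschitz_in_beta {m : ℕ} (z : Fin m → ℝ) (lam : ℝ) (hlam : 0 < lam) :
    ∀ β₁ β₂ : Fin m → ℝ,
      norm2 ((fun i => soft (lam * norm2 (z - β₁)) (z i)) -
              (fun i => soft (lam * norm2 (z - β₂)) (z i))) ≤
        lam * Real.sqrt m * norm2 (β₁ - β₂) := by
  intro β₁ β₂
  set t₁ := lam * norm2 (z - β₁)
  set t₂ := lam * norm2 (z - β₂)
  have hstep1 : norm2 ((fun i => soft t₁ (z i)) - (fun i => soft t₂ (z i)))
      ≤ Real.sqrt m * |t₁ - t₂| := by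
    have hsum : ∑ i, ((soft t₁ (z i) - soft t₂ (z i)) ^ 2)
        ≤ ∑ _i : Fin m, (t₁ - t₂) ^ 2 := by
      apply Finset.sum_le_sum
      intro i _
      have := soft_lip t₁ t₂ (z i)
      calc (soft t₁ (z i) - soft t₂ (z i)) ^ 2
          = |soft t₁ (z i) - soft t₂ (z i)| ^ 2 := (sq_abs _).symm
        _ ≤ |t₁ - t₂| ^ 2 := by
            exact pow_le_pow_left₀ (abs_nonneg _) this 2
        _ = (t₁ - t₂) ^ 2 := sq_abs _
    have : norm2 ((fun i => soft t₁ (z i)) - (fun i => soft t₂ (z i)))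
        ≤ Real.sqrt (∑ _i : Fin m, (t₁ - t₂) ^ 2) := by
      apply Real.sqrt_le_sqrt
      simpa [norm2, Pi.sub_apply] using hsum
    refine this.trans_eq ?_
    rw [Finset.sum_const, Finset.card_univ, Fintype.card_fin, nsmul_eq_mul,
      Real.sqrt_mul (by positivity), Real.sqrt_sq_eq_abs]
  have hstep2 : |t₁ - t₂| ≤ lam * norm2 (β₁ - β₂) := by
    have : t₁ - t₂ = lam * (norm2 (z - β₁) - norm2 (z - β₂)) := by ring
    rw [this, abs_mul, abs_of_pos hlam]
    apply mul_le_mul_of_nonneg_left _ hlam.le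
    have h := abs_norm2_sub_norm2 (z - β₁) (z - β₂)
    have he : (z - β₁) - (z - β₂) = β₂ - β₁ := by abel
    rw [he] at h
    refine h.trans_eq ?_
    unfold norm2
    congr 1
    apply Finset.sum_congr rfl
    intro i _
    simp [Pi.sub_apply]
    ring
  calc norm2 ((fun i => soft t₁ (z i)) - (fun i => soft t₂ (z i)))
      ≤ Real.sqrt m * |t₁ - t₂| := hstep1
    _ ≤ Real.sqrt m * (lam * norm2 (β₁ - β₂)) := by
        exact mul_le_mul_of_nonneg_left hstep2 (Real.sqrt_nonneg _)
    _ = lam * Real.sqrt m * norm2 (β₁ - β₂) := by ring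
end

section
/- Fix β ∈ ℝᵐ and λ > 0, and let η_t(x) = sign(x)·max(|x| − t, 0) be the soft-thresholding function. Then for all z₁, z₂ ∈ ℝᵐ and every index i = 1,…,m, |η_{λ‖β−z₁‖₂}(z_{1,i}) − η_{λ‖β−z₂‖₂}(z_{2,i})| ≤ max( 2|z_{1,i} − z_{2,i}|, |z_{1,i} − z_{2,i}| + λ‖z₁ − z₂‖₂ ). -/
open scoped BigOperators

lemma soft_eq (t x : ℝ) (ht : 0 ≤ t) : soft t x = x - min (max x (-t)) t := by
  unfold soft
  rcases lt_trichotomy x 0 with h | h | h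
  · rw [Real.sign_of_neg h, abs_of_neg h]
    rcases le_total x (-t) with h1 | h1 <;>
      simp [max_def, min_def] <;> split_ifs <;> linarith
  · simp [h, ht]
  · rw [Real.sign_of_pos h, abs_of_pos h]
    rcases le_total x t with h1 | h1 <;>
      simp [max_def, min_def] <;> split_ifs <;> linarith

lemma soft_lip_x (t x y : ℝ) (ht : 0 ≤ t) : |soft t x - soft t y| ≤ |x - y| := by
  rw [soft_eq t x ht, soft_eq t y ht, abs_le]
  rcases le_total x y with h | h
  · rw [abs_of_nonpos (sub_nonpos.mpr h)]
    constructor <;> simp only [min_def, max_def] <;> split_ifs <;> linarith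
  · rw [abs_of_nonneg (sub_nonneg.mpr h)]
    constructor <;> simp only [min_def, max_def] <;> split_ifs <;> linarith

lemma soft_lip_t (t s x : ℝ) (ht : 0 ≤ t) (hs : 0 ≤ s) :
    |soft t x - soft s x| ≤ |t - s| := by
  rw [soft_eq _ _ ht, soft_eq _ _ hs, abs_le]
  rcases le_total t s with h | h
  · rw [abs_of_nonpos (sub_nonpos.mpr h)]
    constructor <;> simp only [min_def, max_def] <;> split_ifs <;> linarith
  · rw [abs_of_nonneg (sub_nonneg.mpr h)]
    constructor <;> simp only [min_def, max_def] <;> split_ifs <;> linarith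

lemma norm2_eq {m : ℕ} (v : Fin m → ℝ) :
    norm2 v = ‖(EuclideanSpace.equiv (Fin m) ℝ).symm v‖ := by
  simp [norm2, EuclideanSpace.norm_eq, Real.norm_eq_abs, sq_abs]

lemma norm2_rev_triangle {m : ℕ} (a b c : Fin m → ℝ) :
    |norm2 (a - b) - norm2 (a - c)| ≤ norm2 (b - c) := by
  rw [norm2_eq (a - b), norm2_eq (a - c), norm2_eq (b - c)]
  rw [map_sub, map_sub, map_sub]
  have := abs_norm_sub_norm_le ((EuclideanSpace.equiv (Fin m) ℝ).symm a -
    (EuclideanSpace.equiv (Fin m) ℝ).symm b)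
    ((EuclideanSpace.equiv (Fin m) ℝ).symm a - (EuclideanSpace.equiv (Fin m) ℝ).symm c)
  calc _ ≤ _ := this
  _ = _ := by rw [show ∀ x y z : EuclideanSpace ℝ (Fin m), x - y - (x - z) = -(y - z) by
        intros; abel, norm_neg]

/-- For fixed `β` and `λ > 0`, componentwise bound:
`|η_{λ‖β−z₁‖₂}(z_{1,i}) − η_{λ‖β−z₂‖₂}(z_{2,i})| ≤
  max(2|z_{1,i} − z_{2,i}|, |z_{1,i} − z_{2,i}| + λ‖z₁ − z₂‖₂)`. -/
theorem coordinatewise_lipschitz_in_z {m : ℕ} (β : Fin m → ℝ) (lam : ℝ)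
    (hlam : 0 < lam) :
    ∀ (z₁ z₂ : Fin m → ℝ) (i : Fin m),
      |soft (lam * norm2 (β - z₁)) (z₁ i) - soft (lam * norm2 (β - z₂)) (z₂ i)| ≤
        max (2 * |z₁ i - z₂ i|) (|z₁ i - z₂ i| + lam * norm2 (z₁ - z₂)) := by
  intro z₁ z₂ i
  set t₁ := lam * norm2 (β - z₁) with ht₁
  set t₂ := lam * norm2 (β - z₂) with ht₂
  have h1 : (0:ℝ) ≤ t₁ := mul_nonneg hlam.le (norm2_nonneg _)
  have h2 : (0:ℝ) ≤ t₂ := mul_nonneg hlam.le (norm2_nonneg _)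
  have key : |soft t₁ (z₁ i) - soft t₂ (z₂ i)| ≤ |z₁ i - z₂ i| + lam * norm2 (z₁ - z₂) := by
    have step : |soft t₁ (z₁ i) - soft t₂ (z₂ i)| ≤
        |soft t₁ (z₁ i) - soft t₁ (z₂ i)| + |soft t₁ (z₂ i) - soft t₂ (z₂ i)| :=
      abs_sub_le _ _ _
    have a1 := soft_lip_x t₁ (z₁ i) (z₂ i) h1
    have a2 := soft_lip_t t₁ t₂ (z₂ i) h1 h2
    have a3 : |t₁ - t₂| ≤ lam * norm2 (z₁ - z₂) := by
      rw [ht₁, ht₂, ← mul_sub, abs_mul, abs_of_pos hlam]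
      exact mul_le_mul_of_nonneg_left (norm2_rev_triangle β z₁ z₂) hlam.le
    linarith
  exact key.trans (le_max_right _ _)
end

section
/- Let y ∈ ℝⁿ be non-constant, i.e., y ≠ ȳ·1 where ȳ = (1/n)Σᵢ yᵢ and 1 is the all-ones vector, let X ∈ ℝ^{n×q}, and let λ > 0. Define F(c, β) = ‖y − c·1 − Xβ‖₂ + λ‖β‖₁ for c ∈ ℝ and β ∈ ℝ^q. Then (c, β) = (ȳ, 0) is a global minimizer of F if and only if λ ≥ λ₀(y, X) := ‖Xᵀ(y − ȳ·1)‖_∞ / ‖y − ȳ·1‖₂. -/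
open scoped BigOperators

/-- The SRAMlet objective `F(c, β) = ‖y − c·1 − Xβ‖₂ + λ‖β‖₁`. -/
noncomputable def sramletObj {n q : ℕ} (y : Fin n → ℝ) (X : Matrix (Fin n) (Fin q) ℝ)
    (lam : ℝ) (c : ℝ) (β : Fin q → ℝ) : ℝ :=
  norm2 (fun i => y i - c - X.mulVec β i) + lam * norm1 β

/-- The zero-thresholding function
`λ₀(y, X) = ‖Xᵀ(y − ȳ·1)‖_∞ / ‖y − ȳ·1‖₂` with `ȳ = (1/n)Σᵢ yᵢ`. -/
noncomputable def zeroThresh {n q : ℕ} (y : Fin n → ℝ)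
    (X : Matrix (Fin n) (Fin q) ℝ) : ℝ :=
  norminf (X.transpose.mulVec (fun i => y i - (∑ j, y j) / n)) /
    norm2 (fun i => y i - (∑ j, y j) / n)

lemma sq_norm2 {m : ℕ} (v : Fin m → ℝ) : norm2 v ^ 2 = ∑ i, v i ^ 2 :=
  Real.sq_sqrt (Finset.sum_nonneg fun _ _ => sq_nonneg _)

lemma cauchy {m : ℕ} (f g : Fin m → ℝ) : ∑ i, f i * g i ≤ norm2 f * norm2 g := by
  calc ∑ i, f i * g i ≤ |∑ i, f i * g i| := le_abs_self _
  _ = Real.sqrt ((∑ i, f i * g i) ^ 2) := (Real.sqrt_sq_eq_abs _).symm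
  _ ≤ Real.sqrt ((∑ i, f i ^ 2) * (∑ i, g i ^ 2)) :=
      Real.sqrt_le_sqrt (Finset.sum_mul_sq_le_sq_mul_sq Finset.univ f g)
  _ = norm2 f * norm2 g := Real.sqrt_mul (Finset.sum_nonneg fun _ _ => sq_nonneg _) _

lemma abs_le_norminf {m : ℕ} (v : Fin m → ℝ) (j : Fin m) : |v j| ≤ norminf v :=
  le_ciSup (Set.Finite.bddAbove (Set.finite_range fun i => |v i|)) j

lemma norm1_nonneg {m : ℕ} (v : Fin m → ℝ) : 0 ≤ norm1 v :=
  Finset.sum_nonneg fun _ _ => abs_nonneg _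

lemma aux_min_iff {n q : ℕ} (r : Fin n → ℝ) (X : Matrix (Fin n) (Fin q) ℝ) (lam : ℝ)
    (hlam : 0 < lam) (hrsum : ∑ i, r i = 0) (hNpos : 0 < norm2 r) :
    (∀ (d : ℝ) (β : Fin q → ℝ),
        norm2 r ≤ norm2 (fun i => r i - d - X.mulVec β i) + lam * norm1 β) ↔
      norminf (X.transpose.mulVec r) ≤ lam * norm2 r := by
  set N : ℝ := norm2 r with hN
  set S : ℝ := ∑ i, r i ^ 2 with hSdef
  set v : Fin q → ℝ := X.transpose.mulVec r with hv
  have hS : N ^ 2 = S := sq_norm2 r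
  have hvj : ∀ j, v j = ∑ i, X i j * r i := by
    intro j
    simp [hv, Matrix.mulVec, dotProduct, Matrix.transpose_apply]
  have hsum : ∀ β : Fin q → ℝ, ∑ i, r i * X.mulVec β i = ∑ k, v k * β k := by
    intro β
    calc ∑ i, r i * X.mulVec β i
        = ∑ i, ∑ k, X i k * r i * β k := by
          refine Finset.sum_congr rfl fun i _ => ?_
          rw [Matrix.mulVec, dotProduct, Finset.mul_sum]
          exact Finset.sum_congr rfl fun k _ => by ring
      _ = ∑ k, ∑ i, X i k * r i * β k := Finset.sum_comm
      _ = ∑ k, v k * β k := by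
          refine Finset.sum_congr rfl fun k _ => ?_
          rw [hvj k, Finset.sum_mul]
  have hid : ∀ (d : ℝ) (β : Fin q → ℝ),
      ∑ i, r i * (r i - d - X.mulVec β i) = S - ∑ k, v k * β k := by
    intro d β
    have h1 : ∀ i, r i * (r i - d - X.mulVec β i)
        = r i ^ 2 - d * r i - r i * X.mulVec β i := fun i => by ring
    rw [Finset.sum_congr rfl fun i _ => h1 i, Finset.sum_sub_distrib,
      Finset.sum_sub_distrib, ← Finset.mul_sum, hrsum, hsum β, hSdef]
    ring
  constructor
  · intro hmin
    refine Real.iSup_le (fun j => ?_) (by positivity)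
    by_contra hcon
    push_neg at hcon
    set a : ℝ := v j with ha
    set C : ℝ := ∑ i, X i j ^ 2 with hC
    set ε : ℝ := |a| - lam * N with hε
    have hεpos : 0 < ε := by simp [hε]; linarith
    set t : ℝ := min (N / (2 * lam)) (ε / (|C - lam ^ 2| + 1)) with htdef
    have ht : 0 < t := lt_min (by positivity) (by positivity)
    have ht1 : lam * t < N := by
      have h := min_le_left (N / (2 * lam)) (ε / (|C - lam ^ 2| + 1))
      rw [← htdef, le_div_iff₀ (by positivity : (0:ℝ) < 2 * lam)] at h
      nlinarith
    have ht2 : t * (C - lam ^ 2) < 2 * ε := by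
      have h := min_le_right (N / (2 * lam)) (ε / (|C - lam ^ 2| + 1))
      rw [← htdef, le_div_iff₀ (by positivity : (0:ℝ) < |C - lam ^ 2| + 1)] at h
      have habs : t * (C - lam ^ 2) ≤ t * |C - lam ^ 2| :=
        mul_le_mul_of_nonneg_left (le_abs_self _) ht.le
      nlinarith
    set s : ℝ := if 0 ≤ a then (1 : ℝ) else -1 with hsdef
    have hs : s * a = |a| := by
      by_cases h : 0 ≤ a
      · simp [hsdef, h, abs_of_nonneg h]
      · push_neg at h
        simp [hsdef, not_le.mpr h, abs_of_neg h]
    have hs2 : s ^ 2 = 1 := by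
      by_cases h : 0 ≤ a <;> simp [hsdef, h]
    set β : Fin q → ℝ := fun k => if k = j then t * s else 0 with hβ
    have hmul : ∀ i, X.mulVec β i = t * s * X i j := by
      intro i
      rw [Matrix.mulVec, dotProduct]
      rw [Finset.sum_eq_single j]
      · simp [hβ]; ring
      · intro k _ hk; simp [hβ, hk]
      · intro h; exact absurd (Finset.mem_univ j) h
    have hnorm1 : norm1 β = t := by
      rw [norm1, Finset.sum_eq_single j]
      · have : |s| = 1 := by by_cases h : 0 ≤ a <;> simp [hsdef, h]
        simp [hβ, abs_mul, this, abs_of_pos ht]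
      · intro k _ hk; simp [hβ, hk]
      · intro h; exact absurd (Finset.mem_univ j) h
    have hQ : ∑ i, (r i - 0 - X.mulVec β i) ^ 2 = S - 2 * t * |a| + t ^ 2 * C := by
      have h1 : ∀ i, (r i - 0 - X.mulVec β i) ^ 2
          = r i ^ 2 - 2 * t * s * (X i j * r i) + t ^ 2 * s ^ 2 * X i j ^ 2 := by
        intro i; rw [hmul i]; ring
      rw [Finset.sum_congr rfl fun i _ => h1 i, Finset.sum_add_distrib,
        Finset.sum_sub_distrib, ← Finset.mul_sum, ← Finset.mul_sum, ← hvj j, ← ha, hSdef, ← hC]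
      linear_combination (-(2:ℝ) * t) * hs + (t ^ 2 * C) * hs2
    have hQlt : ∑ i, (r i - 0 - X.mulVec β i) ^ 2 < (N - lam * t) ^ 2 := by
      rw [hQ]
      nlinarith [hS, ht, ht2, hεpos]
    have hlt : norm2 (fun i => r i - 0 - X.mulVec β i) < N - lam * t := by
      rw [norm2, Real.sqrt_lt' (by linarith)]
      exact hQlt
    have := hmin 0 β
    rw [hnorm1] at this
    linarith
  · intro hle d β
    have hcs := cauchy r (fun i => r i - d - X.mulVec β i)
    have h2 : ∑ k, v k * β k ≤ norminf v * norm1 β := by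
      calc ∑ k, v k * β k ≤ ∑ k, |v k| * |β k| := by
            refine Finset.sum_le_sum fun k _ => ?_
            calc v k * β k ≤ |v k * β k| := le_abs_self _
            _ = |v k| * |β k| := abs_mul _ _
        _ ≤ ∑ k, norminf v * |β k| :=
            Finset.sum_le_sum fun k _ =>
              mul_le_mul_of_nonneg_right (abs_le_norminf v k) (abs_nonneg _)
        _ = norminf v * norm1 β := by rw [norm1, Finset.mul_sum]
    have h3 : norminf v * norm1 β ≤ lam * N * norm1 β :=
      mul_le_mul_of_nonneg_right hle (norm1_nonneg β)
    have hid' := hid d β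
    have hn2 := norm2_nonneg (fun i => r i - d - X.mulVec β i)
    nlinarith [hS, hNpos]

/-- For non-constant `y` and `λ > 0`, `(c, β) = (ȳ, 0)` is a global minimizer of
the SRAMlet objective `F(c, β) = ‖y − c·1 − Xβ‖₂ + λ‖β‖₁` iff `λ ≥ λ₀(y, X)`. -/
theorem null_fit_isMinimizer_iff {n q : ℕ} (y : Fin n → ℝ)
    (X : Matrix (Fin n) (Fin q) ℝ) (lam : ℝ) (hlam : 0 < lam)
    (hy : y ≠ fun _ => (∑ j, y j) / n) :
    (∀ (c : ℝ) (β : Fin q → ℝ),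
        sramletObj y X lam ((∑ j, y j) / n) 0 ≤ sramletObj y X lam c β) ↔
      zeroThresh y X ≤ lam := by
  have hn : (n : ℝ) ≠ 0 := by
    intro h
    have hn0 : n = 0 := by exact_mod_cast h
    subst hn0
    exact hy (funext fun i => i.elim0)
  set ybar : ℝ := (∑ j, y j) / n with hybar
  set r : Fin n → ℝ := fun i => y i - ybar with hrdef
  have hzt : zeroThresh y X = norminf (X.transpose.mulVec r) / norm2 r := rfl
  have hrsum : ∑ i, r i = 0 := by
    simp only [hrdef]
    rw [Finset.sum_sub_distrib, Finset.sum_const, Finset.card_univ, Fintype.card_fin,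
      nsmul_eq_mul, hybar]
    field_simp
    ring
  have hNpos : 0 < norm2 r := by
    obtain ⟨i₀, hi₀⟩ := Function.ne_iff.mp hy
    have hri : r i₀ ≠ 0 := sub_ne_zero.mpr hi₀
    rw [norm2]
    apply Real.sqrt_pos.mpr
    refine Finset.sum_pos' (fun i _ => sq_nonneg _) ⟨i₀, Finset.mem_univ _, ?_⟩
    rw [← sq_abs]
    exact pow_pos (abs_pos.mpr hri) 2
  have hF0 : sramletObj y X lam ybar 0 = norm2 r := by
    show norm2 (fun i => y i - ybar - X.mulVec 0 i) + lam * norm1 0 = norm2 r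
    simp [norm1, Matrix.mulVec_zero]
    rfl
  have hF : ∀ (c : ℝ) (β : Fin q → ℝ), sramletObj y X lam c β
      = norm2 (fun i => r i - (c - ybar) - X.mulVec β i) + lam * norm1 β := by
    intro c β
    have he : (fun i => y i - c - X.mulVec β i)
        = fun i => r i - (c - ybar) - X.mulVec β i := by
      funext i; simp only [hrdef]; ring
    show norm2 (fun i => y i - c - X.mulVec β i) + lam * norm1 β = _
    rw [he]
  rw [hzt, div_le_iff₀ hNpos]
  constructor
  · intro hmin
    refine (aux_min_iff r X lam hlam hrsum hNpos).mp ?_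
    intro d β
    have h := hmin (d + ybar) β
    rw [hF0, hF] at h
    simpa [add_sub_cancel_right] using h
  · intro h c β
    rw [hF0, hF]
    exact (aux_min_iff r X lam hlam hrsum hNpos).mpr h (c - ybar) β
end
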